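/- For every η ∈ Ω: the set T_η ⊆ ℕ² has cardinality λ_{2,n}, the map v ↦ v̄ is injective on T_η, and hence the set {v̄ : v ∈ T_η} ⊆ ℂ^{Λ_{2,n}} has cardinality λ_{2,n}. -/

import Mathlib

open Finset

/-- `Λ_{2,n}`: pairs `α ∈ ℕ²` with `1 ≤ α₁ + α₂ ≤ n`. -/
def Lam2 (n : ℕ) : Finset (ℕ × ℕ) :=
  ((range (n+1)) ×ˢ (range (n+1))).filter (fun α => 1 ≤ α.1 + α.2 ∧ α.1 + α.2 ≤ n)

/-- `v̄ ∈ ℂ^{Λ_{2,n}}`, with `α`-coordinate `C(v₁,α₁)·C(v₂,α₂)`. -/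
noncomputable def vbar (n : ℕ) (v : ℕ × ℕ) : (Lam2 n) → ℂ :=
  fun α => ((v.1.choose α.1.1 * v.2.choose α.1.2 : ℕ) : ℂ)

/-- `Λ_{3,n}`: triples `β ∈ ℕ³` with `1 ≤ β₁ + β₂ + β₃ ≤ n`. -/
def Lam3 (n : ℕ) : Finset (ℕ × ℕ × ℕ) :=
  ((range (n+1)) ×ˢ (range (n+1)) ×ˢ (range (n+1))).filter
    (fun β => 1 ≤ β.1 + β.2.1 + β.2.2 ∧ β.1 + β.2.1 + β.2.2 ≤ n)

/-- The linear map `A_n : ℕ³ → ℕ²` with matrix rows `(1,1,n)` and `(0,1,n+1)`. -/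
def Amap (n : ℕ) (β : ℕ × ℕ × ℕ) : ℕ × ℕ :=
  (β.1 + β.2.1 + n * β.2.2, β.2.1 + (n+1) * β.2.2)

/-- `c_β = Σ_{γ ≤ β} (−1)^{|β−γ|} C(β,γ) (A_nγ)‾`. -/
noncomputable def cvec (n : ℕ) (β : ℕ × ℕ × ℕ) : (Lam2 n) → ℂ :=
  ∑ γ ∈ (range (β.1+1)) ×ˢ (range (β.2.1+1)) ×ˢ (range (β.2.2+1)),
    (((-1 : ℂ) ^ ((β.1 + β.2.1 + β.2.2) - (γ.1 + γ.2.1 + γ.2.2))) *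
      ((β.1.choose γ.1 * β.2.1.choose γ.2.1 * β.2.2.choose γ.2.2 : ℕ) : ℂ)) •
      vbar n (Amap n γ)

/-- `J ∈ S_{A_n}`: `J ⊆ Λ_{3,n}`, `|J| = λ_{2,n}`, `det L^c_J ≠ 0`. -/
def memSA (n : ℕ) (J : Finset (ℕ × ℕ × ℕ)) : Prop :=
  J ⊆ Lam3 n ∧ J.card = (Lam2 n).card ∧
    ∀ e : (Lam2 n) ≃ J,
      (Matrix.of fun i j : (Lam2 n) => cvec n (e i).1 j).det ≠ 0

/-- `m_J = Σ_{β ∈ J} A_nβ`. -/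
def mJ (n : ℕ) (J : Finset (ℕ × ℕ × ℕ)) : ℕ × ℕ := ∑ β ∈ J, Amap n β

/-- `f_k(v) = k·v₁ + (1−k)·v₂`. -/
def fk (k : ℕ) (v : ℕ × ℕ) : ℤ := (k : ℤ) * v.1 + (1 - (k : ℤ)) * v.2

/-- Data of a sequence `η = (z, d₀, d₁, …, d_r)`. -/
structure OmegaData where
  r : ℕ
  z : Bool
  d : ℕ → ℕ

/-- `η ∈ Ω`: `d₀ = 0`, `d_i ≥ 1` for `1 ≤ i ≤ r` (and `d_i = 0` beyond `r`),
and `d₀ + ⋯ + d_r = n`. -/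
def OmegaData.IsOmega (n : ℕ) (η : OmegaData) : Prop :=
  η.d 0 = 0 ∧ (∀ i, 1 ≤ i → i ≤ η.r → 1 ≤ η.d i) ∧
  (∀ i, η.r < i → η.d i = 0) ∧
  (∑ i ∈ range (η.r + 1), η.d i) = n

/-- The unique `t` with `Σ_{i=0}^{t−1} d_i < j ≤ Σ_{i=0}^{t} d_i`. -/
noncomputable def tIdx (η : OmegaData) (j : ℕ) : ℕ :=
  sInf {t | j ≤ ∑ i ∈ range (t+1), η.d i}

/-- The vector `v_{j,η} ∈ ℕ²`. -/
noncomputable def vvec (η : OmegaData) (j : ℕ) : ℕ × ℕ :=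
  let t := tIdx η j
  let c := j - ∑ i ∈ range t, η.d i
  let a := (∑ i ∈ range t, if (Odd i ↔ Odd t) then η.d i else 0) + c
  if (η.z = true) ↔ Odd t then (a, 0) else (0, a)

/-- `T_{j,η}` for `1 ≤ j ≤ n`, and `T_{0,η} = {(1,1),…,(n,n)}`. -/
noncomputable def Tj (n : ℕ) (η : OmegaData) (j : ℕ) : Finset (ℕ × ℕ) :=
  if j = 0 then (range n).image (fun q => (q+1, q+1))
  else (range (n - j + 1)).image (fun p => vvec η j + (p, p))

/-- `T_η = ⋃_{j=0}^{n} T_{j,η}`. -/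
noncomputable def Tset (n : ℕ) (η : OmegaData) : Finset (ℕ × ℕ) :=
  (range (n+1)).biUnion (fun j => Tj n η j)

/-- `r_{i,η} = n·π₂(v_{i,η})`. -/
noncomputable def rshift (n : ℕ) (η : OmegaData) (i : ℕ) : ℕ := n * (vvec η i).2

/-- `T'_η = T_{0,η} ∪ ⋃_{i=1}^{n} (T_{i,η} + r_{i,η})`. -/
noncomputable def Tset' (n : ℕ) (η : OmegaData) : Finset (ℕ × ℕ) :=
  Tj n η 0 ∪ (Finset.Icc 1 n).biUnion
    (fun i => (Tj n η i).image (fun v => v + (rshift n η i, rshift n η i)))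

/-- `J_η`: the (unique) subset of `Λ_{3,n}` with `A_n(J_η) = T'_η`. -/
noncomputable def Jset (n : ℕ) (η : OmegaData) : Finset (ℕ × ℕ × ℕ) :=
  (Lam3 n).filter (fun β => Amap n β ∈ Tset' n η)

/-- `z_k = 1` iff `f_k((1,0)) ≤ f_k((n,n+1))`. -/
def zk (n k : ℕ) : Bool := decide (fk k (1, 0) ≤ fk k (n, n+1))

/-- `t_l` in the recursive definition of `η_k`, where `O`, `E` are the odd- and
even-indexed partial sums `Σ_{j<l, j odd} d_{k,j}` and `Σ_{j<l, j even} d_{k,j}`. -/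
noncomputable def tval (n k : ℕ) (l O E : ℕ) : ℕ :=
  let w := (if Odd l then E else O) + 1
  if ((zk n k = true) ↔ Odd l) then
    sSup {m : ℕ | (m : ℤ) * fk k (1, 0) ≤ fk k (w * n, w * (n+1))}
  else
    sSup {m : ℕ | (m : ℤ) * fk k (n, n+1) ≤ fk k (w, 0)}

/-- The pair `(Σ_{j≤l, j odd} d_{k,j}, Σ_{j≤l, j even} d_{k,j})` of the recursion
defining `η_k`. -/
noncomputable def oeSums (n k : ℕ) : ℕ → ℕ × ℕ
  | 0 => (0, 0)
  | l + 1 =>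
    let p := oeSums n k l
    let O := p.1
    let E := p.2
    let S := O + E
    let dnext := if S < n then
        min (n - S) (tval n k (l+1) O E - (if Odd (l+1) then O else E))
      else 0
    if Odd (l+1) then (O + dnext, E) else (O, E + dnext)

/-- `d_{k,l}`. -/
noncomputable def dk (n k : ℕ) : ℕ → ℕ
  | 0 => 0
  | l + 1 =>
    let p := oeSums n k l
    let O := p.1
    let E := p.2
    let S := O + E
    if S < n then
      min (n - S) (tval n k (l+1) O E - (if Odd (l+1) then O else E))
    else 0

/-- `η_k = (z_k, d_{k,0}, …, d_{k,r})`, where `r` is the first index with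
`Σ_{j=0}^{r} d_{k,j} = n`. -/
noncomputable def etak (n k : ℕ) : OmegaData :=
  { r := sInf {r | ∑ j ∈ range (r+1), dk n k j = n},
    z := zk n k,
    d := dk n k }


/-! ### Auxiliary lemmas -/

/-- The `a`-value of `v_{j,η}`. -/
noncomputable def aval (η : OmegaData) (j : ℕ) : ℕ :=
  (∑ i ∈ range (tIdx η j), if (Odd i ↔ Odd (tIdx η j)) then η.d i else 0)
    + (j - ∑ i ∈ range (tIdx η j), η.d i)

lemma vvec_eq (η : OmegaData) (j : ℕ) :
    vvec η j = if (η.z = true) ↔ Odd (tIdx η j) then (aval η j, 0) else (0, aval η j) :=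
  rfl

lemma tIdx_spec (n : ℕ) (η : OmegaData) (hη : η.IsOmega n) {j : ℕ} (hjn : j ≤ n) :
    j ≤ ∑ i ∈ range (tIdx η j + 1), η.d i := by
  have hmem : η.r ∈ {t | j ≤ ∑ i ∈ range (t+1), η.d i} := by
    simp only [Set.mem_setOf_eq, hη.2.2.2]; exact hjn
  exact Nat.sInf_mem ⟨η.r, hmem⟩

lemma tIdx_lt (n : ℕ) (η : OmegaData) {j : ℕ} (hj1 : 1 ≤ j) :
    ∑ i ∈ range (tIdx η j), η.d i < j := by
  rcases Nat.eq_zero_or_pos (tIdx η j) with h | h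
  · simp [h]; omega
  · obtain ⟨s, hs⟩ : ∃ s, tIdx η j = s + 1 := ⟨tIdx η j - 1, by omega⟩
    have hdef : tIdx η j = sInf {t | j ≤ ∑ i ∈ range (t+1), η.d i} := rfl
    have hns : s ∉ {t | j ≤ ∑ i ∈ range (t+1), η.d i} :=
      Nat.notMem_of_lt_sInf (by omega)
    simp only [Set.mem_setOf_eq, not_le] at hns
    rw [hs]; exact hns

lemma tIdx_mono (n : ℕ) (η : OmegaData) (hη : η.IsOmega n) {j j' : ℕ}
    (hjj : j ≤ j') (hj'n : j' ≤ n) : tIdx η j ≤ tIdx η j' := by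
  apply Nat.sInf_le
  have := tIdx_spec n η hη hj'n
  exact le_trans hjj this

lemma one_le_aval (n : ℕ) (η : OmegaData) {j : ℕ} (hj1 : 1 ≤ j) :
    1 ≤ aval η j := by
  have := tIdx_lt n η hj1
  unfold aval; omega

lemma aval_lt (n : ℕ) (η : OmegaData) (hη : η.IsOmega n) {j j' : ℕ}
    (hj1 : 1 ≤ j) (hjj' : j < j') (hj'n : j' ≤ n)
    (hpar : Odd (tIdx η j) ↔ Odd (tIdx η j')) : aval η j < aval η j' := by
  set t := tIdx η j with ht
  set t' := tIdx η j' with ht'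
  have h1 : j ≤ ∑ i ∈ range (t + 1), η.d i := tIdx_spec n η hη (by omega)
  have h2 : ∑ i ∈ range t, η.d i < j := tIdx_lt n η hj1
  have h2' : ∑ i ∈ range t', η.d i < j' := tIdx_lt n η (by omega)
  have htt' : t ≤ t' := tIdx_mono n η hη (le_of_lt hjj') hj'n
  rcases eq_or_lt_of_le htt' with heq | hlt
  · unfold aval
    rw [← ht, ← ht', ← heq]
    omega
  · have hsum1 : ∑ i ∈ range (t+1), η.d i = ∑ i ∈ range t, η.d i + η.d t :=
      Finset.sum_range_succ _ _
    have key : (∑ i ∈ range t, if Odd i ↔ Odd t then η.d i else 0) + η.d t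
        ≤ ∑ i ∈ range t', if Odd i ↔ Odd t' then η.d i else 0 := by
      have hcongr : ∀ i, (if Odd i ↔ Odd t' then η.d i else 0)
          = (if Odd i ↔ Odd t then η.d i else 0) := by
        intro i
        by_cases hi : Odd i ↔ Odd t
        · rw [if_pos hi, if_pos (hi.trans hpar)]
        · rw [if_neg hi, if_neg (fun h => hi (h.trans hpar.symm))]
      calc (∑ i ∈ range t, if Odd i ↔ Odd t then η.d i else 0) + η.d t
          = ∑ i ∈ range (t+1), if Odd i ↔ Odd t then η.d i else 0 := by
            rw [Finset.sum_range_succ, if_pos Iff.rfl]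
        _ = ∑ i ∈ range (t+1), if Odd i ↔ Odd t' then η.d i else 0 := by
            exact Finset.sum_congr rfl (fun i _ => (hcongr i).symm)
        _ ≤ ∑ i ∈ range t', if Odd i ↔ Odd t' then η.d i else 0 := by
            apply Finset.sum_le_sum_of_subset
            exact Finset.range_subset_range.mpr hlt
    unfold aval
    rw [← ht, ← ht']
    omega

lemma parity_of_sides (η : OmegaData) {t t' : ℕ}
    (h : ((η.z = true) ↔ Odd t) ↔ ((η.z = true) ↔ Odd t')) : Odd t ↔ Odd t' := by
  by_cases hz : η.z = true <;> tauto

lemma card_Tj_zero (n : ℕ) (η : OmegaData) : (Tj n η 0).card = n := by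
  rw [Tj, if_pos rfl, Finset.card_image_of_injective, Finset.card_range]
  intro a b hab
  simpa using hab

lemma card_Tj_pos (n : ℕ) (η : OmegaData) {j : ℕ} (hj : j ≠ 0) :
    (Tj n η j).card = n - j + 1 := by
  rw [Tj, if_neg hj, Finset.card_image_of_injective, Finset.card_range]
  intro a b hab
  simpa [Prod.ext_iff] using hab

lemma Tj_pairwise_disjoint (n : ℕ) (η : OmegaData) (hη : η.IsOmega n) :
    ∀ j ∈ range (n+1), ∀ j' ∈ range (n+1), j ≠ j' →
      Disjoint (Tj n η j) (Tj n η j') := by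
  have key : ∀ j j' : ℕ, j' ≤ n → j < j' → Disjoint (Tj n η j) (Tj n η j') := by
    intro j j' hj'n hlt
    rw [Finset.disjoint_left]
    intro x hx hx'
    have hj'0 : j' ≠ 0 := by omega
    rw [Tj, if_neg hj'0] at hx'
    simp only [Finset.mem_image, Finset.mem_range] at hx'
    obtain ⟨p', hp', hxp'⟩ := hx'
    have ha' : 1 ≤ aval η j' := one_le_aval n η (by omega)
    rw [vvec_eq] at hxp'
    rcases Nat.eq_zero_or_pos j with rfl | hj1
    · rw [Tj, if_pos rfl] at hx
      simp only [Finset.mem_image, Finset.mem_range] at hx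
      obtain ⟨q, hq, hxq⟩ := hx
      by_cases hs' : (η.z = true) ↔ Odd (tIdx η j')
      · rw [if_pos hs'] at hxp'
        rw [← hxq, Prod.ext_iff] at hxp'
        simp only [Prod.fst_add, Prod.snd_add] at hxp'
        omega
      · rw [if_neg hs'] at hxp'
        rw [← hxq, Prod.ext_iff] at hxp'
        simp only [Prod.fst_add, Prod.snd_add] at hxp'
        omega
    · rw [Tj, if_neg (by omega : j ≠ 0)] at hx
      simp only [Finset.mem_image, Finset.mem_range] at hx
      obtain ⟨p, hp, hxp⟩ := hx
      rw [vvec_eq] at hxp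
      have ha : 1 ≤ aval η j := one_le_aval n η hj1
      rw [← hxp, Prod.ext_iff] at hxp'
      simp only [Prod.fst_add, Prod.snd_add] at hxp'
      by_cases hs : (η.z = true) ↔ Odd (tIdx η j) <;>
        by_cases hs' : (η.z = true) ↔ Odd (tIdx η j')
      · rw [if_pos hs, if_pos hs'] at hxp'
        have hpar : Odd (tIdx η j) ↔ Odd (tIdx η j') :=
          parity_of_sides η (iff_of_true hs hs')
        have := aval_lt n η hη hj1 hlt hj'n hpar
        simp only at hxp'
        omega
      · rw [if_pos hs, if_neg hs'] at hxp'
        simp only at hxp'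
        omega
      · rw [if_neg hs, if_pos hs'] at hxp'
        simp only at hxp'
        omega
      · rw [if_neg hs, if_neg hs'] at hxp'
        have hpar : Odd (tIdx η j) ↔ Odd (tIdx η j') :=
          parity_of_sides η (iff_of_false hs hs')
        have := aval_lt n η hη hj1 hlt hj'n hpar
        simp only at hxp'
        omega
  intro j hj j' hj' hne
  simp only [Finset.mem_range] at hj hj'
  rcases lt_or_gt_of_ne hne with h | h
  · exact key j j' (by omega) h
  · exact (key j' j (by omega) h).symm

lemma card_Tset (n : ℕ) (η : OmegaData) (hη : η.IsOmega n) :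
    (Tset n η).card = n + ∑ i ∈ range n, (n - i) := by
  rw [Tset, Finset.card_biUnion (Tj_pairwise_disjoint n η hη)]
  rw [Finset.sum_range_succ']
  rw [card_Tj_zero]
  have : ∀ i ∈ range n, (Tj n η (i+1)).card = n - i := by
    intro i hi
    rw [card_Tj_pos n η (by omega)]
    simp only [Finset.mem_range] at hi
    omega
  rw [Finset.sum_congr rfl this]
  exact add_comm _ _

lemma card_Lam2 (n : ℕ) : (Lam2 n).card = n + ∑ i ∈ range n, (n - i) := by
  rw [Finset.card_eq_sum_card_fiberwise
    (f := Prod.fst) (t := range (n+1))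
    (fun x hx => by
      simp only [Lam2, Finset.mem_coe, Finset.mem_filter, Finset.mem_product] at hx
      exact hx.1.1)]
  have hfib : ∀ a ∈ range (n+1), ((Lam2 n).filter (fun x => x.1 = a)).card
      = if a = 0 then n else n + 1 - a := by
    intro a ha
    simp only [Finset.mem_range] at ha
    by_cases h0 : a = 0
    · subst h0
      have : (Lam2 n).filter (fun x => x.1 = 0)
          = (Finset.Icc 1 n).image (fun b => ((0 : ℕ), b)) := by
        ext x
        simp only [Lam2, Finset.mem_filter, Finset.mem_product, Finset.mem_range,
          Finset.mem_image, Finset.mem_Icc, Prod.ext_iff]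
        constructor
        · rintro ⟨⟨⟨h1, h2⟩, h3, h4⟩, h5⟩
          exact ⟨x.2, ⟨by omega, by omega⟩, h5.symm, rfl⟩
        · rintro ⟨b, ⟨hb1, hb2⟩, hx1, hx2⟩
          constructor
          · constructor
            · omega
            · omega
          · omega
      rw [this, Finset.card_image_of_injective, Nat.card_Icc]
      · simp
      · intro a b hab; simpa using hab
    · have : (Lam2 n).filter (fun x => x.1 = a)
          = (range (n + 1 - a)).image (fun b => (a, b)) := by
        ext x
        simp only [Lam2, Finset.mem_filter, Finset.mem_product, Finset.mem_range,
          Finset.mem_image, Prod.ext_iff]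
        constructor
        · rintro ⟨⟨⟨h1, h2⟩, h3, h4⟩, h5⟩
          exact ⟨x.2, by omega, h5.symm, rfl⟩
        · rintro ⟨b, hb, hx1, hx2⟩
          constructor
          · constructor
            · constructor
              · omega
              · omega
            · omega
          · omega
      rw [this, Finset.card_image_of_injective _ (fun x y hxy => by simpa using hxy),
        Finset.card_range, if_neg h0]
  have hsc : ∀ i ∈ range n, (if i + 1 = 0 then n else n + 1 - (i+1)) = n - i := by
    intro i hi
    rw [if_neg (by omega)]
    simp only [Finset.mem_range] at hi
    omega
  rw [Finset.sum_congr rfl hfib, Finset.sum_range_succ',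
    Finset.sum_congr rfl hsc]
  have h0 : (if (0:ℕ) = 0 then n else n + 1 - 0) = n := if_pos rfl
  rw [h0]
  exact add_comm _ _

lemma vbar_injective (n : ℕ) (hn : 1 ≤ n) : Function.Injective (vbar n) := by
  intro u v h
  have h10 : ((1, 0) : ℕ × ℕ) ∈ Lam2 n := by
    simp only [Lam2, Finset.mem_filter, Finset.mem_product, Finset.mem_range]
    omega
  have h01 : ((0, 1) : ℕ × ℕ) ∈ Lam2 n := by
    simp only [Lam2, Finset.mem_filter, Finset.mem_product, Finset.mem_range]
    omega
  have e1 := congrFun h ⟨(1, 0), h10⟩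
  have e2 := congrFun h ⟨(0, 1), h01⟩
  simp only [vbar, Nat.choose_one_right, Nat.choose_zero_right, mul_one, one_mul,
    Nat.cast_inj] at e1 e2
  exact Prod.ext e1 e2

theorem stmt8 (n : ℕ) (hn : 1 ≤ n) (η : OmegaData) (hη : η.IsOmega n) :
    (Tset n η).card = (Lam2 n).card ∧
    Set.InjOn (vbar n) ↑(Tset n η) ∧
    (vbar n '' ↑(Tset n η)).ncard = (Lam2 n).card := by
  have hinj : Set.InjOn (vbar n) ↑(Tset n η) :=
    fun a _ b _ hab => vbar_injective n hn hab
  have hcard : (Tset n η).card = (Lam2 n).card := by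
    rw [card_Tset n η hη, card_Lam2 n]
  refine ⟨hcard, hinj, ?_⟩
  rw [Set.ncard_image_of_injOn hinj, Set.ncard_coe_finset, hcard]
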